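/- For every ψ ∈ C₀¹(ℝ²), with Ω = {(t,x) : x < 0, t > 0} and P = {(t,0) : t ≥ 0}: ∫_Ω ∂_tψ dx dt + ∫₀^∞ t ∂_tψ(t,0) dt + ∫_Ω ∂_xψ dx dt + ∫_{-∞}^0 ψ(0,x) dx = ∫₀^∞ ψ(t,0) dt − ∫₀^∞ ψ(t,0) dt = 0. In other words, the measures ϱ = 𝟙_Ω 𝓛² + t δ_P and m = 𝟙_Ω 𝓛² satisfy the weak mass conservation ⟨ϱ, ∂_tψ⟩ + ⟨m, ∂_xψ⟩ + ∫_{-∞}^0 ψ(0,x) dx = 0. -/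

import Mathlib

open MeasureTheory

theorem stmt_17 (ψ : ℝ × ℝ → ℝ) (hψ : ContDiff ℝ 1 ψ)
    (hψc : HasCompactSupport ψ) :
    (∫ t in Set.Ioi (0:ℝ), ∫ x in Set.Iio (0:ℝ), deriv (fun s => ψ (s, x)) t) +
    (∫ t in Set.Ioi (0:ℝ), t * deriv (fun s => ψ (s, 0)) t) +
    (∫ t in Set.Ioi (0:ℝ), ∫ x in Set.Iio (0:ℝ), deriv (fun y => ψ (t, y)) x) +
    (∫ x in Set.Iio (0:ℝ), ψ (0, x)) = 0 := by
  have hψd : Differentiable ℝ ψ := hψ.differentiable one_ne_zero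
  -- slices
  have hslice1 : ∀ x : ℝ, ContDiff ℝ 1 (fun s => ψ (s, x)) := fun x =>
    hψ.comp (contDiff_id.prodMk contDiff_const)
  have hslice2 : ∀ t : ℝ, ContDiff ℝ 1 (fun y => ψ (t, y)) := fun t =>
    hψ.comp (contDiff_const.prodMk contDiff_id)
  have hemb1 : ∀ x : ℝ, Topology.IsClosedEmbedding (fun s : ℝ => (s, x)) := by
    intro x
    have : Isometry (fun s : ℝ => (s, x)) := by
      intro a b
      simp [Prod.edist_eq]
    exact this.isClosedEmbedding
  have hemb2 : ∀ t : ℝ, Topology.IsClosedEmbedding (fun y : ℝ => (t, y)) := by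
    intro t
    have : Isometry (fun y : ℝ => (t, y)) := by
      intro a b
      simp [Prod.edist_eq]
    exact this.isClosedEmbedding
  have hcs1 : ∀ x : ℝ, HasCompactSupport (fun s => ψ (s, x)) := fun x =>
    hψc.comp_isClosedEmbedding (hemb1 x)
  have hcs2 : ∀ t : ℝ, HasCompactSupport (fun y => ψ (t, y)) := fun t =>
    hψc.comp_isClosedEmbedding (hemb2 t)
  -- identify deriv of the first slice with fderiv applied to (1,0)
  have key1 : ∀ x t : ℝ, deriv (fun s => ψ (s, x)) t = fderiv ℝ ψ (t, x) (1, 0) := by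
    intro x t
    have h2 : HasDerivAt (fun s : ℝ => (s, x)) ((1:ℝ), (0:ℝ)) t := by
      simpa using (HasDerivAt.prodMk (hasDerivAt_id t) (hasDerivAt_const t x))
    have := (hψd (t, x)).hasFDerivAt.comp_hasDerivAt t h2
    exact this.deriv
  -- Term A : swap and integrate
  have hA : (∫ t in Set.Ioi (0:ℝ), ∫ x in Set.Iio (0:ℝ), deriv (fun s => ψ (s, x)) t)
      = ∫ x in Set.Iio (0:ℝ), -ψ (0, x) := by
    have hD1c : Continuous (fun p : ℝ × ℝ => fderiv ℝ ψ p (1, 0)) :=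
      (hψ.continuous_fderiv one_ne_zero).clm_apply continuous_const
    have hD1s : HasCompactSupport (fun p : ℝ × ℝ => fderiv ℝ ψ p (1, 0)) :=
      hψc.fderiv_apply ℝ ((1:ℝ), (0:ℝ))
    have hint : Integrable (fun p : ℝ × ℝ => fderiv ℝ ψ p (1, 0)) :=
      hD1c.integrable_of_hasCompactSupport hD1s
    have hswap : (∫ t in Set.Ioi (0:ℝ), ∫ x in Set.Iio (0:ℝ), fderiv ℝ ψ (t, x) (1, 0))
        = ∫ x in Set.Iio (0:ℝ), ∫ t in Set.Ioi (0:ℝ), fderiv ℝ ψ (t, x) (1, 0) := by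
      apply integral_integral_swap
      rw [Measure.prod_restrict]
      refine Integrable.restrict ?_
      rwa [← Measure.volume_eq_prod]
    calc (∫ t in Set.Ioi (0:ℝ), ∫ x in Set.Iio (0:ℝ), deriv (fun s => ψ (s, x)) t)
        = ∫ t in Set.Ioi (0:ℝ), ∫ x in Set.Iio (0:ℝ), fderiv ℝ ψ (t, x) (1, 0) := by
          simp_rw [key1]
      _ = ∫ x in Set.Iio (0:ℝ), ∫ t in Set.Ioi (0:ℝ), fderiv ℝ ψ (t, x) (1, 0) := hswap
      _ = ∫ x in Set.Iio (0:ℝ), ∫ t in Set.Ioi (0:ℝ), deriv (fun s => ψ (s, x)) t := by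
          simp_rw [key1]
      _ = ∫ x in Set.Iio (0:ℝ), -ψ (0, x) := by
          refine setIntegral_congr_fun measurableSet_Iio fun x _ => ?_
          exact (hcs1 x).integral_Ioi_deriv_eq (hslice1 x) 0
  -- Term C : inner integral
  have hC : (∫ t in Set.Ioi (0:ℝ), ∫ x in Set.Iio (0:ℝ), deriv (fun y => ψ (t, y)) x)
      = ∫ t in Set.Ioi (0:ℝ), ψ (t, 0) := by
    refine setIntegral_congr_fun measurableSet_Ioi fun t _ => ?_
    rw [setIntegral_congr_set (Iio_ae_eq_Iic)]
    exact (hcs2 t).integral_Iic_deriv_eq (hslice2 t) 0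
  -- Term B : integration by parts
  have hB : (∫ t in Set.Ioi (0:ℝ), t * deriv (fun s => ψ (s, 0)) t)
      = -∫ t in Set.Ioi (0:ℝ), ψ (t, 0) := by
    set g : ℝ → ℝ := fun s => ψ (s, 0) with hg_def
    have hg : ContDiff ℝ 1 g := hslice1 0
    have hgc : HasCompactSupport g := hcs1 0
    have hgd : ∀ t : ℝ, HasDerivAt g (deriv g t) t := fun t =>
      (hg.differentiable one_ne_zero t).hasDerivAt
    have hF : ∀ t ∈ Set.Ici (0:ℝ),
        HasDerivAt (fun t => t * g t) (g t + t * deriv g t) t := by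
      intro t _
      have := HasDerivAt.mul (hasDerivAt_id' (x := t)) (hgd t)
      rw [one_mul] at this
      exact this
    have hint_g : Integrable g :=
      hg.continuous.integrable_of_hasCompactSupport hgc
    have hint_tg' : Integrable (fun t => t * deriv g t) := by
      refine Continuous.integrable_of_hasCompactSupport ?_ ?_
      · exact continuous_id.mul (hg.continuous_deriv le_rfl)
      · apply HasCompactSupport.mono hgc.deriv
        intro t ht
        simp only [Function.mem_support] at ht ⊢
        intro h
        exact ht (by simp [h])
    have hint' : IntegrableOn (fun t => g t + t * deriv g t) (Set.Ioi (0:ℝ)) :=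
      (hint_g.add hint_tg').integrableOn
    have htend : Filter.Tendsto (fun t => t * g t) Filter.atTop (nhds 0) := by
      rw [hasCompactSupport_iff_eventuallyEq, Filter.coclosedCompact_eq_cocompact] at hgc
      have hg0 : g =ᶠ[Filter.atTop] 0 := hgc.filter_mono _root_.atTop_le_cocompact
      refine Filter.Tendsto.congr' ?_ tendsto_const_nhds
      filter_upwards [hg0] with t ht
      simp [ht]
    have h0 : (∫ t in Set.Ioi (0:ℝ), (g t + t * deriv g t)) = 0 := by
      rw [integral_Ioi_of_hasDerivAt_of_tendsto' hF hint' htend]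
      simp
    have hsplit : (∫ t in Set.Ioi (0:ℝ), (g t + t * deriv g t))
        = (∫ t in Set.Ioi (0:ℝ), g t) + ∫ t in Set.Ioi (0:ℝ), t * deriv g t :=
      integral_add hint_g.integrableOn hint_tg'.integrableOn
    have := hsplit.symm.trans h0
    linarith [this]
  rw [hA, hB, hC, integral_neg]
  ring
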